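/- Under condition A (ψ^U ≤ β ψ^L for some β > 1), for all 0 < ξ₁ < ξ₂: ψ^U(ξ₂)/ψ^U(ξ₁) ≥ (ξ₂/ξ₁)^{2/β}, provided ψ^U(ξ₁) > 0. -/

import Mathlib

open MeasureTheory Real Set

/-- A Lévy measure on `ℝ`: a Borel measure with `∫ min(1, u²) μ(du) < ∞`. -/
def IsLevyMeasure (μ : Measure ℝ) : Prop :=
  ∫⁻ u, ENNReal.ofReal (min 1 (u ^ 2)) ∂μ < ⊤

/-- `ψ^L(ξ) = ∫_{|ξu|<1} (ξu)² μ(du)`. -/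
noncomputable def psiL (μ : Measure ℝ) (ξ : ℝ) : ℝ :=
  (∫⁻ u in {u : ℝ | |ξ * u| < 1}, ENNReal.ofReal ((ξ * u) ^ 2) ∂μ).toReal

/-- `ψ^U(ξ) = ∫ min((ξu)², 1) μ(du)`. -/
noncomputable def psiU (μ : Measure ℝ) (ξ : ℝ) : ℝ :=
  (∫⁻ u, ENNReal.ofReal (min ((ξ * u) ^ 2) 1) ∂μ).toReal

/-- `Re ψ(ξ) = ∫ (1 - cos(ξu)) μ(du)`. -/
noncomputable def rePsi (μ : Measure ℝ) (ξ : ℝ) : ℝ :=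
  (∫⁻ u, ENNReal.ofReal (1 - Real.cos (ξ * u)) ∂μ).toReal

/-- `ρ_t = inf{ξ > 0 : Re ψ(ξ) ≥ 1/t}`. -/
noncomputable def rho (μ : Measure ℝ) (t : ℝ) : ℝ :=
  sInf {ξ : ℝ | 0 < ξ ∧ 1 / t ≤ rePsi μ ξ}


namespace PsiAux

noncomputable def Fe (μ : Measure ℝ) (ξ : ℝ) : ENNReal :=
  ∫⁻ u, ENNReal.ofReal (min ((ξ * u) ^ 2) 1) ∂μ

noncomputable def Le (μ : Measure ℝ) (ξ : ℝ) : ENNReal :=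
  ∫⁻ u in {u : ℝ | |ξ * u| < 1}, ENNReal.ofReal ((ξ * u) ^ 2) ∂μ

lemma sq_mul_mono {a b u : ℝ} (ha : 0 ≤ a) (hab : a ≤ b) : (a*u)^2 ≤ (b*u)^2 := by
  have h : a^2 ≤ b^2 := by nlinarith
  calc (a*u)^2 = a^2 * u^2 := by ring
    _ ≤ b^2 * u^2 := mul_le_mul_of_nonneg_right h (sq_nonneg u)
    _ = (b*u)^2 := by ring

lemma sq_abs_mul (x u : ℝ) : (x*u)^2 = (x*|u|)^2 := by
  rw [mul_pow, mul_pow, sq_abs]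

lemma lintIoc (u a b : ℝ) (ha : 0 ≤ a) (hab : a ≤ b) :
    ∫⁻ η in Ioc a b, ENNReal.ofReal (2 * η * u ^ 2) = ENNReal.ofReal ((b*u)^2 - (a*u)^2) := by
  rw [← ofReal_integral_eq_lintegral_ofReal]
  · congr 1
    rw [← intervalIntegral.integral_of_le hab]
    have h : ∀ η : ℝ, 2 * η * u ^ 2 = η * (2 * u ^ 2) := fun η => by ring
    simp_rw [h]
    rw [intervalIntegral.integral_mul_const, integral_id]
    ring
  · exact Continuous.integrableOn_Ioc (by continuity)
  · filter_upwards [ae_restrict_mem measurableSet_Ioc] with η hη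
    have h0 : (0:ℝ) ≤ η := ha.trans hη.1.le
    positivity

lemma pointwise (u a b : ℝ) (ha : 0 < a) (hab : a ≤ b) :
    ENNReal.ofReal (min ((a*u)^2) 1)
      + ∫⁻ η in Ioc a b, (if |η * u| < 1 then ENNReal.ofReal (2 * η * u ^ 2) else 0)
    = ENNReal.ofReal (min ((b*u)^2) 1) := by
  rcases eq_or_ne u 0 with rfl | hu
  · norm_num
  · have hu' : 0 < |u| := abs_pos.2 hu
    set c : ℝ := 1 / |u| with hc
    have hcpos : 0 < c := by positivity
    have hiff : ∀ η : ℝ, 0 < η → (|η * u| < 1 ↔ η < c) := by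
      intro η hη0
      rw [abs_mul, abs_of_pos hη0, hc]
      exact (lt_div_iff₀ hu').symm
    have key : ∫⁻ η in Ioc a b, (if |η * u| < 1 then ENNReal.ofReal (2 * η * u ^ 2) else 0)
        = ∫⁻ η in Iio c ∩ Ioc a b, ENNReal.ofReal (2 * η * u ^ 2) := by
      have h1 : ∫⁻ η in Ioc a b, (if |η * u| < 1 then ENNReal.ofReal (2 * η * u ^ 2) else 0)
          = ∫⁻ η in Ioc a b, (Iio c).indicator (fun η => ENNReal.ofReal (2 * η * u ^ 2)) η := by
        apply setLIntegral_congr_fun measurableSet_Ioc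
        intro η hη
        dsimp only
        have h0 : 0 < η := ha.trans hη.1
        by_cases h : η < c
        · rw [if_pos ((hiff η h0).2 h), indicator_of_mem (mem_Iio.2 h)]
        · rw [if_neg (fun hlt => h ((hiff η h0).1 hlt)),
            indicator_of_notMem (by simpa using h)]
      rw [h1, lintegral_indicator measurableSet_Iio, Measure.restrict_restrict measurableSet_Iio]
    rcases lt_or_ge b c with h1 | h1
    · -- b < c : squares regime
      have hset : Iio c ∩ Ioc a b = Ioc a b :=
        inter_eq_self_of_subset_right (fun η hη => lt_of_le_of_lt hη.2 h1)
      have hb1 : (b*u)^2 < 1 := by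
        have hbu : b * |u| < 1 := (lt_div_iff₀ hu').1 h1
        have hb0 : 0 ≤ b * |u| := mul_nonneg (ha.le.trans hab) (abs_nonneg u)
        rw [sq_abs_mul]; nlinarith
      have ha1 : (a*u)^2 < 1 := lt_of_le_of_lt (sq_mul_mono ha.le hab) hb1
      rw [key, hset, lintIoc u a b ha.le hab, min_eq_left ha1.le, min_eq_left hb1.le,
        ← ENNReal.ofReal_add (sq_nonneg _) (by linarith [sq_mul_mono (u := u) ha.le hab])]
      congr 1; ring
    · rcases le_or_gt c a with h2 | h2
      · -- c ≤ a : flat regime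
        have hset : Iio c ∩ Ioc a b = (∅ : Set ℝ) := by
          ext η
          simp only [mem_inter_iff, mem_Iio, mem_Ioc, mem_empty_iff_false, iff_false, not_and]
          intro h3 h4; linarith
        have ha1 : 1 ≤ (a*u)^2 := by
          have hau : 1 ≤ a * |u| := by
            rw [hc, div_le_iff₀ hu'] at h2; linarith
          rw [sq_abs_mul]; nlinarith
        have hb1 : 1 ≤ (b*u)^2 := le_trans ha1 (sq_mul_mono ha.le hab)
        rw [key, hset, min_eq_right ha1, min_eq_right hb1]
        simp
      · -- a < c ≤ b
        have hset : Iio c ∩ Ioc a b = Ioo a c := by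
          ext η
          simp only [mem_inter_iff, mem_Iio, mem_Ioc, mem_Ioo]
          exact ⟨fun h => ⟨h.2.1, h.1⟩, fun h => ⟨h.2, h.1, h.2.le.trans h1⟩⟩
        have hcu : (c*u)^2 = 1 := by
          rw [hc]; field_simp; rw [sq_abs]
        have ha1 : (a*u)^2 < 1 := by
          have hau : a * |u| < 1 := (lt_div_iff₀ hu').1 h2
          have ha0 : 0 ≤ a * |u| := mul_nonneg ha.le (abs_nonneg u)
          rw [sq_abs_mul]; nlinarith
        have hb1 : 1 ≤ (b*u)^2 := by
          have hbu : 1 ≤ b * |u| := by rw [hc, div_le_iff₀ hu'] at h1; linarith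
          rw [sq_abs_mul]; nlinarith
        rw [key, hset, restrict_Ioo_eq_restrict_Ioc, lintIoc u a c ha.le h2.le, hcu,
          min_eq_left ha1.le, min_eq_right hb1,
          ← ENNReal.ofReal_add (sq_nonneg _) (by linarith)]
        congr 1; ring

end PsiAux

namespace PsiAux2
open PsiAux

lemma f_meas : Measurable (fun p : ℝ × ℝ =>
    if |p.1 * p.2| < 1 then ENNReal.ofReal (2 * p.1 * p.2 ^ 2) else 0) := by
  apply Measurable.ite
  · exact (isOpen_lt (by continuity) continuous_const).measurableSet
  · exact (by continuity : Continuous fun p : ℝ × ℝ => 2 * p.1 * p.2 ^ 2).measurable.ennreal_ofReal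
  · exact measurable_const

lemma setmeas (η : ℝ) : MeasurableSet {u : ℝ | |η * u| < 1} :=
  (isOpen_lt (by continuity) continuous_const).measurableSet

lemma identity_aux (μ : Measure ℝ) [SigmaFinite μ] (a b : ℝ) (ha : 0 < a) (hab : a ≤ b) :
    Fe μ b = Fe μ a + ∫⁻ η in Ioc a b, ENNReal.ofReal (2/η) * Le μ η := by
  have step1 : Fe μ b = Fe μ a +
      ∫⁻ u, (∫⁻ η in Ioc a b, (if |η * u| < 1 then ENNReal.ofReal (2 * η * u ^ 2) else 0)) ∂μ := by
    rw [Fe, Fe, ← lintegral_add_left (by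
      exact (by continuity : Continuous fun u : ℝ => min ((a*u)^2) 1).measurable.ennreal_ofReal)]
    exact lintegral_congr fun u => (pointwise u a b ha hab).symm
  have swap : ∫⁻ u, (∫⁻ η in Ioc a b,
        (if |η * u| < 1 then ENNReal.ofReal (2 * η * u ^ 2) else 0)) ∂μ
      = ∫⁻ η in Ioc a b, (∫⁻ u, (if |η * u| < 1 then ENNReal.ofReal (2 * η * u ^ 2) else 0) ∂μ) := by
    have hmeas : AEMeasurable (Function.uncurry (fun (η u : ℝ) =>
        if |η * u| < 1 then ENNReal.ofReal (2 * η * u ^ 2) else 0))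
        ((volume.restrict (Ioc a b)).prod μ) := Measurable.aemeasurable f_meas
    exact (lintegral_lintegral_swap hmeas).symm
  have inner : ∀ η ∈ Ioc a b,
      (∫⁻ u, (if |η * u| < 1 then ENNReal.ofReal (2 * η * u ^ 2) else 0) ∂μ)
      = ENNReal.ofReal (2/η) * Le μ η := by
    intro η hη
    have hη0 : 0 < η := ha.trans hη.1
    have hpt : ∀ u : ℝ, (if |η * u| < 1 then ENNReal.ofReal (2 * η * u ^ 2) else 0)
        = ENNReal.ofReal (2/η) *
          ({u : ℝ | |η * u| < 1}.indicator (fun u => ENNReal.ofReal ((η*u)^2)) u) := by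
      intro u
      by_cases h : |η * u| < 1
      · rw [if_pos h, indicator_of_mem (by exact h), ← ENNReal.ofReal_mul (by positivity)]
        congr 1
        field_simp
      · rw [if_neg h, indicator_of_notMem (by exact h), mul_zero]
    calc (∫⁻ u, (if |η * u| < 1 then ENNReal.ofReal (2 * η * u ^ 2) else 0) ∂μ)
        = ∫⁻ u, ENNReal.ofReal (2/η) *
            ({u : ℝ | |η * u| < 1}.indicator (fun u => ENNReal.ofReal ((η*u)^2)) u) ∂μ :=
          lintegral_congr hpt
      _ = ENNReal.ofReal (2/η) *
            ∫⁻ u, {u : ℝ | |η * u| < 1}.indicator (fun u => ENNReal.ofReal ((η*u)^2)) u ∂μ :=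
          lintegral_const_mul _ (Measurable.indicator
            ((by continuity : Continuous fun u : ℝ => (η*u)^2).measurable.ennreal_ofReal)
            (setmeas η))
      _ = ENNReal.ofReal (2/η) * Le μ η := by
          rw [lintegral_indicator (setmeas η)]; rfl
  rw [step1, swap, setLIntegral_congr_fun measurableSet_Ioc (fun η hη => inner η hη)]

lemma Fe_lt_top {μ : Measure ℝ} (hμ : ∫⁻ u, ENNReal.ofReal (min 1 (u ^ 2)) ∂μ < ⊤) (ξ : ℝ) :
    Fe μ ξ < ⊤ := by
  have hb : Fe μ ξ ≤ ∫⁻ u, ENNReal.ofReal (max (ξ^2) 1) * ENNReal.ofReal (min 1 (u^2)) ∂μ := by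
    apply lintegral_mono
    intro u
    dsimp only
    rw [← ENNReal.ofReal_mul (le_max_of_le_right zero_le_one)]
    apply ENNReal.ofReal_le_ofReal
    rcases le_total (u^2) 1 with h | h
    · rw [min_eq_right h]
      calc min ((ξ*u)^2) 1 ≤ (ξ*u)^2 := min_le_left _ _
        _ = ξ^2 * u^2 := by ring
        _ ≤ max (ξ^2) 1 * u^2 := mul_le_mul_of_nonneg_right (le_max_left _ _) (sq_nonneg u)
    · rw [min_eq_left h]
      calc min ((ξ*u)^2) 1 ≤ 1 := min_le_right _ _
        _ ≤ max (ξ^2) 1 * 1 := by rw [mul_one]; exact le_max_right _ _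
  calc Fe μ ξ ≤ _ := hb
    _ = ENNReal.ofReal (max (ξ^2) 1) * ∫⁻ u, ENNReal.ofReal (min 1 (u^2)) ∂μ :=
      lintegral_const_mul' _ _ ENNReal.ofReal_ne_top
    _ < ⊤ := ENNReal.mul_lt_top (by exact ENNReal.ofReal_lt_top) hμ

lemma Fe_mono (μ : Measure ℝ) {a b : ℝ} (ha : 0 ≤ a) (hab : a ≤ b) : Fe μ a ≤ Fe μ b :=
  lintegral_mono fun u => ENNReal.ofReal_le_ofReal
    (min_le_min (sq_mul_mono ha hab) le_rfl)

lemma Le_le_Fe (μ : Measure ℝ) (ξ : ℝ) : Le μ ξ ≤ Fe μ ξ := by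
  rw [Le, ← lintegral_indicator (setmeas ξ)]
  apply lintegral_mono
  intro u
  by_cases h : |ξ * u| < 1
  · rw [indicator_of_mem (by exact h)]
    apply ENNReal.ofReal_le_ofReal
    rw [min_eq_left]
    nlinarith [sq_abs (ξ*u), abs_nonneg (ξ*u)]
  · rw [indicator_of_notMem (by exact h)]
    exact zero_le

end PsiAux2


namespace PsiAux3
open PsiAux PsiAux2

lemma zero_out (μ : Measure ℝ) (g : ℝ → ENNReal) (hg : g 0 = 0) :
    ∫⁻ u, g u ∂μ = ∫⁻ u, g u ∂(μ.restrict {(0:ℝ)}ᶜ) := by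
  rw [← lintegral_add_compl g (MeasurableSet.singleton (0:ℝ)), lintegral_singleton, hg,
    zero_mul, zero_add]

lemma finite_far {μ : Measure ℝ} (hμ : ∫⁻ u, ENNReal.ofReal (min 1 (u ^ 2)) ∂μ < ⊤)
    {ε : ℝ} (hε : 0 < ε) : μ {u : ℝ | ε < |u|} < ⊤ := by
  set S : Set ℝ := {u : ℝ | ε < |u|} with hS
  have hSmeas : MeasurableSet S := (isOpen_lt continuous_const (by continuity)).measurableSet
  have hbound : ENNReal.ofReal (min 1 (ε^2)) * μ S ≤ ∫⁻ u, ENNReal.ofReal (min 1 (u ^ 2)) ∂μ := by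
    calc ENNReal.ofReal (min 1 (ε^2)) * μ S
        = ∫⁻ _ in S, ENNReal.ofReal (min 1 (ε^2)) ∂μ := (setLIntegral_const S _).symm
      _ ≤ ∫⁻ u in S, ENNReal.ofReal (min 1 (u ^ 2)) ∂μ := by
          apply lintegral_mono_ae
          filter_upwards [ae_restrict_mem hSmeas] with u hu
          apply ENNReal.ofReal_le_ofReal
          apply min_le_min le_rfl
          have : ε < |u| := hu
          nlinarith [sq_abs u, abs_nonneg u]
      _ ≤ _ := setLIntegral_le_lintegral _ _
  rw [lt_top_iff_ne_top]
  intro htop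
  rw [htop, ENNReal.mul_top (by
    simp only [ne_eq, ENNReal.ofReal_eq_zero, not_le]
    positivity)] at hbound
  exact hμ.ne (top_le_iff.1 hbound)

lemma sf {μ : Measure ℝ} (hμ : ∫⁻ u, ENNReal.ofReal (min 1 (u ^ 2)) ∂μ < ⊤) :
    SigmaFinite (μ.restrict {(0:ℝ)}ᶜ) := by
  refine ⟨⟨⟨fun n => {u : ℝ | ((n:ℝ)+1)⁻¹ < |u|} ∪ {0}, fun _ => mem_univ _, fun n => ?_, ?_⟩⟩⟩
  · have h1 : (μ.restrict {(0:ℝ)}ᶜ) ({u : ℝ | ((n:ℝ)+1)⁻¹ < |u|} ∪ {0})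
        = μ (({u : ℝ | ((n:ℝ)+1)⁻¹ < |u|} ∪ {0}) ∩ {(0:ℝ)}ᶜ) :=
      Measure.restrict_apply' (MeasurableSet.singleton (0:ℝ)).compl
    rw [h1]
    refine lt_of_le_of_lt (measure_mono ?_) (finite_far hμ (ε := ((n:ℝ)+1)⁻¹) (inv_pos.2 (by positivity)))
    rintro x ⟨hx1 | hx1, hx2⟩
    · exact hx1
    · exact absurd hx1 hx2
  · ext x
    simp only [mem_iUnion, mem_union, mem_setOf_eq, mem_singleton_iff, mem_univ, iff_true]
    rcases eq_or_ne x 0 with rfl | hx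
    · exact ⟨0, Or.inr rfl⟩
    · obtain ⟨n, hn⟩ := exists_nat_one_div_lt (abs_pos.2 hx)
      exact ⟨n, Or.inl (by rw [one_div] at hn; exact hn)⟩

lemma Fe_restrict (μ : Measure ℝ) (ξ : ℝ) : Fe μ ξ = Fe (μ.restrict {(0:ℝ)}ᶜ) ξ :=
  zero_out μ _ (by norm_num)

lemma Le_restrict (μ : Measure ℝ) (η : ℝ) : Le μ η = Le (μ.restrict {(0:ℝ)}ᶜ) η := by
  rw [Le, Le, zero_out (μ.restrict {u : ℝ | |η * u| < 1}) _ (by norm_num),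
    Measure.restrict_restrict (MeasurableSet.singleton (0:ℝ)).compl,
    Measure.restrict_restrict (setmeas η), inter_comm]

lemma identity (μ : Measure ℝ) (hμ : ∫⁻ u, ENNReal.ofReal (min 1 (u ^ 2)) ∂μ < ⊤)
    (a b : ℝ) (ha : 0 < a) (hab : a ≤ b) :
    Fe μ b = Fe μ a + ∫⁻ η in Ioc a b, ENNReal.ofReal (2/η) * Le μ η := by
  haveI := sf hμ
  rw [Fe_restrict μ b, Fe_restrict μ a,
    identity_aux (μ.restrict {(0:ℝ)}ᶜ) a b ha hab]
  congr 1
  exact setLIntegral_congr_fun measurableSet_Ioc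
    (by intro η _; dsimp only; rw [Le_restrict μ η])

end PsiAux3

namespace PsiAux4
open PsiAux PsiAux2 PsiAux3

lemma FleL {μ : Measure ℝ} (hμ : ∫⁻ u, ENNReal.ofReal (min 1 (u ^ 2)) ∂μ < ⊤)
    {β : ℝ} (hβ : 1 < β)
    (hA : ∀ ξ : ℝ, (Fe μ ξ).toReal ≤ β * (Le μ ξ).toReal) (ξ : ℝ) :
    Fe μ ξ ≤ ENNReal.ofReal β * Le μ ξ := by
  have hF := Fe_lt_top hμ ξ
  have hL : Le μ ξ ≠ ⊤ := ((Le_le_Fe μ ξ).trans_lt hF).ne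
  calc Fe μ ξ = ENNReal.ofReal (Fe μ ξ).toReal := (ENNReal.ofReal_toReal hF.ne).symm
    _ ≤ ENNReal.ofReal (β * (Le μ ξ).toReal) := ENNReal.ofReal_le_ofReal (hA ξ)
    _ = ENNReal.ofReal β * ENNReal.ofReal (Le μ ξ).toReal := ENNReal.ofReal_mul (by linarith)
    _ = ENNReal.ofReal β * Le μ ξ := by rw [ENNReal.ofReal_toReal hL]

lemma stepper {μ : Measure ℝ} (hμ : ∫⁻ u, ENNReal.ofReal (min 1 (u ^ 2)) ∂μ < ⊤)
    {β : ℝ} (hβ : 1 < β)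
    (hA : ∀ ξ : ℝ, (Fe μ ξ).toReal ≤ β * (Le μ ξ).toReal)
    {a b : ℝ} (ha : 0 < a) (hab : a ≤ b) :
    (Fe μ a).toReal * (1 + 2/β * Real.log (b/a)) ≤ (Fe μ b).toReal := by
  have hβ0 : (0:ℝ) < β := by linarith
  have hga : (0:ℝ) ≤ (Fe μ a).toReal := ENNReal.toReal_nonneg
  have hid := identity μ hμ a b ha hab
  have hI : ∫⁻ η in Ioc a b, ENNReal.ofReal (2/(β*η) * (Fe μ a).toReal)
      ≤ ∫⁻ η in Ioc a b, ENNReal.ofReal (2/η) * Le μ η := by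
    apply lintegral_mono_ae
    filter_upwards [ae_restrict_mem measurableSet_Ioc] with η hη
    have hη0 : 0 < η := ha.trans hη.1
    have e2 : ENNReal.ofReal (2/(β*η)) * ENNReal.ofReal β = ENNReal.ofReal (2/η) := by
      rw [← ENNReal.ofReal_mul (by positivity)]
      congr 1
      field_simp
    calc ENNReal.ofReal (2/(β*η) * (Fe μ a).toReal)
        = ENNReal.ofReal (2/(β*η)) * ENNReal.ofReal (Fe μ a).toReal :=
          ENNReal.ofReal_mul (by positivity)
      _ ≤ ENNReal.ofReal (2/(β*η)) * Fe μ a := mul_le_mul_right ENNReal.ofReal_toReal_le _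
      _ ≤ ENNReal.ofReal (2/(β*η)) * Fe μ η := mul_le_mul_right (Fe_mono μ ha.le hη.1.le) _
      _ ≤ ENNReal.ofReal (2/(β*η)) * (ENNReal.ofReal β * Le μ η) :=
          mul_le_mul_right (FleL hμ hβ hA η) _
      _ = ENNReal.ofReal (2/η) * Le μ η := by rw [← mul_assoc, e2]
  have hC : ∫⁻ η in Ioc a b, ENNReal.ofReal (2/(β*η) * (Fe μ a).toReal)
      = ENNReal.ofReal ((2/β * (Fe μ a).toReal) * Real.log (b/a)) := by
    rw [← ofReal_integral_eq_lintegral_ofReal]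
    · congr 1
      rw [← intervalIntegral.integral_of_le hab]
      have hfun : ∀ η : ℝ, 2/(β*η) * (Fe μ a).toReal = (2/β * (Fe μ a).toReal) * (1/η) := by
        intro η; simp only [div_eq_mul_inv, mul_inv, one_mul]; ring
      simp_rw [hfun]
      rw [intervalIntegral.integral_const_mul, integral_one_div (by
        rw [Set.uIcc_of_le hab]; intro h; exact absurd h.1 (by linarith))]
    · apply (ContinuousOn.integrableOn_Icc ?_).mono_set Ioc_subset_Icc_self
      apply ContinuousOn.mul ?_ continuousOn_const
      apply ContinuousOn.div continuousOn_const (by fun_prop)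
      intro x hx
      have hx0 : 0 < x := lt_of_lt_of_le ha hx.1
      positivity
    · filter_upwards [ae_restrict_mem measurableSet_Ioc] with η hη
      have hη0 : 0 < η := ha.trans hη.1
      positivity
  have hlog : 0 ≤ Real.log (b/a) := Real.log_nonneg ((one_le_div ha).2 hab)
  have hup : ENNReal.ofReal ((Fe μ a).toReal + (2/β * (Fe μ a).toReal) * Real.log (b/a))
      ≤ Fe μ b := by
    rw [ENNReal.ofReal_add hga (by positivity), hid]
    exact add_le_add ENNReal.ofReal_toReal_le (hC ▸ hI)
  have hfin := (ENNReal.ofReal_le_iff_le_toReal (Fe_lt_top hμ b).ne).1 hup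
  nlinarith [hfin]

end PsiAux4

/-- Under condition A, `ψ^U(ξ₂)/ψ^U(ξ₁) ≥ (ξ₂/ξ₁)^{2/β}` whenever `0 < ξ₁ < ξ₂`
and `ψ^U(ξ₁) > 0`. -/
theorem psiU_ratio_lower (μ : Measure ℝ) (hμ : IsLevyMeasure μ)
    (hinf : μ Set.univ = ⊤) (β : ℝ) (hβ : 1 < β)
    (hA : ∀ ξ : ℝ, psiU μ ξ ≤ β * psiL μ ξ)
    (ξ₁ ξ₂ : ℝ) (h₁ : 0 < ξ₁) (h₂ : ξ₁ < ξ₂) (hpos : 0 < psiU μ ξ₁) :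
    (ξ₂ / ξ₁) ^ (2 / β) ≤ psiU μ ξ₂ / psiU μ ξ₁ := by
  have hμ' : ∫⁻ u, ENNReal.ofReal (min 1 (u ^ 2)) ∂μ < ⊤ := hμ
  have hA' : ∀ ξ : ℝ, (PsiAux.Fe μ ξ).toReal ≤ β * (PsiAux.Le μ ξ).toReal := hA
  have hstep : ∀ {a b : ℝ}, 0 < a → a ≤ b →
      (PsiAux.Fe μ a).toReal * (1 + 2/β * Real.log (b/a)) ≤ (PsiAux.Fe μ b).toReal :=
    fun ha hab => PsiAux4.stepper hμ' hβ hA' ha hab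
  show (ξ₂ / ξ₁) ^ (2 / β) ≤ (PsiAux.Fe μ ξ₂).toReal / (PsiAux.Fe μ ξ₁).toReal
  have hpos' : 0 < (PsiAux.Fe μ ξ₁).toReal := hpos
  have hβ0 : (0:ℝ) < β := by linarith
  have hr1 : 1 < ξ₂/ξ₁ := (one_lt_div h₁).2 h₂
  have hr0 : (0:ℝ) < ξ₂/ξ₁ := by positivity
  set A := 2/β * Real.log (ξ₂/ξ₁) with hA2
  have hA0 : 0 ≤ A := mul_nonneg (by positivity) (Real.log_nonneg hr1.le)
  have key : ∀ n : ℕ, 1 ≤ n →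
      (PsiAux.Fe μ ξ₁).toReal * (1 + A/n)^n ≤ (PsiAux.Fe μ ξ₂).toReal := by
    intro n hn
    have hn0 : (0:ℝ) < n := by exact_mod_cast hn
    set q := (ξ₂/ξ₁) ^ ((n:ℝ)⁻¹) with hq
    have hq0 : 0 < q := Real.rpow_pos_of_pos hr0 _
    have hq1 : 1 ≤ q := by
      rw [hq, Real.rpow_def_of_pos hr0]
      exact Real.one_le_exp (mul_nonneg (Real.log_nonneg hr1.le) (by positivity))
    have hqn : ξ₁ * q^n = ξ₂ := by
      rw [hq, ← Real.rpow_natCast ((ξ₂/ξ₁) ^ ((n:ℝ)⁻¹)) n, ← Real.rpow_mul hr0.le,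
        inv_mul_cancel₀ (ne_of_gt hn0), Real.rpow_one]
      field_simp
    have hlogq : 2/β * Real.log q = A/n := by
      rw [hq, Real.log_rpow hr0, hA2]
      field_simp
    have hind : ∀ i : ℕ,
        (PsiAux.Fe μ ξ₁).toReal * (1 + A/n)^i ≤ (PsiAux.Fe μ (ξ₁ * q^i)).toReal := by
      intro i
      induction i with
      | zero => simp
      | succ i ih =>
        have hposi : 0 < ξ₁ * q^i := by positivity
        have hle : ξ₁ * q^i ≤ ξ₁ * q^(i+1) := by
          exact mul_le_mul_of_nonneg_left (pow_le_pow_right₀ hq1 (Nat.le_succ i)) h₁.le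
        have hstep2 := hstep hposi hle
        have hdiv : (ξ₁*q^(i+1))/(ξ₁*q^i) = q := by
          rw [pow_succ]
          field_simp
        rw [hdiv, hlogq] at hstep2
        have h1n : (0:ℝ) ≤ 1 + A/n := by positivity
        calc (PsiAux.Fe μ ξ₁).toReal * (1+A/n)^(i+1)
            = ((PsiAux.Fe μ ξ₁).toReal * (1+A/n)^i) * (1+A/n) := by ring
          _ ≤ (PsiAux.Fe μ (ξ₁*q^i)).toReal * (1+A/n) := mul_le_mul_of_nonneg_right ih h1n
          _ ≤ (PsiAux.Fe μ (ξ₁*q^(i+1))).toReal := hstep2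
    have h := hind n
    rwa [hqn] at h
  have hlim : Filter.Tendsto (fun n : ℕ => (PsiAux.Fe μ ξ₁).toReal * (1 + A/n)^n)
      Filter.atTop (nhds ((PsiAux.Fe μ ξ₁).toReal * Real.exp A)) :=
    (Real.tendsto_one_add_div_pow_exp A).const_mul _
  have hle2 : (PsiAux.Fe μ ξ₁).toReal * Real.exp A ≤ (PsiAux.Fe μ ξ₂).toReal :=
    le_of_tendsto hlim (Filter.eventually_atTop.2 ⟨1, fun n hn => key n hn⟩)
  have hexp : Real.exp A = (ξ₂/ξ₁) ^ (2/β) := by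
    rw [Real.rpow_def_of_pos hr0, hA2, mul_comm]
  rw [le_div_iff₀ hpos', ← hexp]
  linarith [hle2]
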